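/- Let x be an (s,t)-flow with exactly two distinct positive arc flow values a > b where b divides a. Then the minimum number of path flows needed to decompose x equals p₁ + p₂, where p₁ = |x_a|/a for a maximum (s,t)-flow x_a in the support network restricted to arcs with flow value a, and p₂ = |x − x_a|/b. -/

import Mathlib

/-- A multidigraph: a set of arcs `E` over vertices `V`, with source and destination maps. -/
structure MultiDigraph (V E : Type) where
  src : E → V
  dst : E → V

namespace MultiDigraph

variable {V E : Type}

/-- `p` is a directed walk from `u` to `v` (as a list of consecutive arcs). -/
def IsWalk (D : MultiDigraph V E) : V → V → List E → Prop
  | u, v, [] => u = v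
  | u, v, e :: p => D.src e = u ∧ D.IsWalk (D.dst e) v p

/-- A directed path from `u` to `v`: a walk without repeated arcs. -/
def IsPath (D : MultiDigraph V E) (u v : V) (p : List E) : Prop :=
  D.IsWalk u v p ∧ p.Nodup

/-- A directed cycle: a nonempty closed walk without repeated arcs. -/
def IsCycle (D : MultiDigraph V E) (p : List E) : Prop :=
  p ≠ [] ∧ p.Nodup ∧ ∃ u, D.IsWalk u u p

/-- The flow sending value `r` along each arc of `p` and `0` elsewhere. -/
def pathFlow [DecidableEq E] (p : List E) (r : ℝ) : E → ℝ :=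
  fun e => if e ∈ p then r else 0

variable [Fintype E] [DecidableEq V]

/-- Net flow out of a vertex `v` (outflow minus inflow), i.e. the balance `b_x(v)`. -/
def excess (D : MultiDigraph V E) (x : E → ℝ) (v : V) : ℝ :=
  (∑ e : E, if D.src e = v then x e else 0) - (∑ e : E, if D.dst e = v then x e else 0)

/-- An `(s,t)`-flow: nonnegative and conserved at every vertex other than `s` and `t`. -/
def IsSTFlow (D : MultiDigraph V E) (s t : V) (x : E → ℝ) : Prop :=
  (∀ e, 0 ≤ x e) ∧ ∀ v, v ≠ s → v ≠ t → D.excess x v = 0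

/-- `x` respects the capacity function `u`. -/
def IsFlowUnder (D : MultiDigraph V E) (u x : E → ℝ) : Prop :=
  ∀ e, 0 ≤ x e ∧ x e ≤ u e

/-- `x` is a maximum `(s,t)`-flow with respect to capacities `u`. -/
def IsMaxFlow (D : MultiDigraph V E) (u : E → ℝ) (s t : V) (x : E → ℝ) : Prop :=
  D.IsFlowUnder u x ∧ D.IsSTFlow s t x ∧
    ∀ y, D.IsFlowUnder u y → D.IsSTFlow s t y → D.excess y s ≤ D.excess x s

/-- A circulation: a (finite) sum of cycle flows. -/
def IsCirculation [DecidableEq E] (D : MultiDigraph V E) (c : E → ℝ) : Prop :=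
  ∃ (n : ℕ) (C : Fin n → List E) (r : Fin n → ℝ),
    (∀ i, D.IsCycle (C i) ∧ 0 < r i) ∧ c = ∑ i, pathFlow (C i) (r i)

/-- `x` decomposes into exactly `k` `(s,t)`-path flows. -/
def Splittable [DecidableEq E] (D : MultiDigraph V E) (s t : V) (x : E → ℝ) (k : ℕ) : Prop :=
  ∃ (P : Fin k → List E) (r : Fin k → ℝ),
    (∀ i, D.IsPath s t (P i) ∧ 0 < r i) ∧ x = ∑ i, pathFlow (P i) (r i)

/-- `x` decomposes into exactly `k` `(s,t)`-path flows, plus possibly a circulation. -/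
def SplittableC [DecidableEq E] (D : MultiDigraph V E) (s t : V) (x : E → ℝ) (k : ℕ) : Prop :=
  ∃ (P : Fin k → List E) (r : Fin k → ℝ) (c : E → ℝ),
    D.IsCirculation c ∧ (∀ i, D.IsPath s t (P i) ∧ 0 < r i) ∧
    x = c + ∑ i, pathFlow (P i) (r i)

/-- The cost of a path: its number of distinct colours. -/
def pathCost {C : Type} [DecidableEq C] (col : E → C) (p : List E) : ℕ :=
  (p.map col).toFinset.card

/-- `x` admits a decomposition into `(s,t)`-path flows (plus possibly a circulation,
which does not affect the cost) whose total colour-cost is `K`. -/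
def DecompCost [DecidableEq E] {C : Type} [DecidableEq C] (D : MultiDigraph V E)
    (col : E → C) (s t : V) (x : E → ℝ) (K : ℕ) : Prop :=
  ∃ (k : ℕ) (P : Fin k → List E) (r : Fin k → ℝ) (c : E → ℝ),
    D.IsCirculation c ∧ (∀ i, D.IsPath s t (P i) ∧ 0 < r i) ∧
    x = c + ∑ i, pathFlow (P i) (r i) ∧ ∑ i, pathCost col (P i) = K

/-- `x` admits a decomposition into `(s,t)`-path flows (only) of total colour-cost `K`. -/
def DecompCostPure [DecidableEq E] {C : Type} [DecidableEq C] (D : MultiDigraph V E)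
    (col : E → C) (s t : V) (x : E → ℝ) (K : ℕ) : Prop :=
  ∃ (k : ℕ) (P : Fin k → List E) (r : Fin k → ℝ),
    (∀ i, D.IsPath s t (P i) ∧ 0 < r i) ∧
    x = ∑ i, pathFlow (P i) (r i) ∧ ∑ i, pathCost col (P i) = K

end MultiDigraph

open MultiDigraph


namespace MultiDigraph
variable {V E : Type}

/-! ### Walk basics -/

lemma isWalk_append {D : MultiDigraph V E} {u w v : V} {p q : List E} :
    D.IsWalk u w p → D.IsWalk w v q → D.IsWalk u v (p ++ q) := by
  induction p generalizing u with
  | nil => intro h hq; cases h; simpa using hq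
  | cons e p ih => intro h hq; exact ⟨h.1, ih h.2 hq⟩

lemma isWalk_append_iff {D : MultiDigraph V E} {u v : V} {p q : List E} :
    D.IsWalk u v (p ++ q) ↔ ∃ w, D.IsWalk u w p ∧ D.IsWalk w v q := by
  induction p generalizing u with
  | nil =>
      constructor
      · intro h; exact ⟨u, rfl, h⟩
      · rintro ⟨w, hw, h⟩; obtain rfl : u = w := hw; exact h
  | cons e p ih =>
      constructor
      · rintro ⟨h1, h2⟩
        obtain ⟨w, hw1, hw2⟩ := ih.1 h2
        exact ⟨w, ⟨h1, hw1⟩, hw2⟩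
      · rintro ⟨w, ⟨h1, h2⟩, h3⟩
        exact ⟨h1, ih.2 ⟨w, h2, h3⟩⟩

lemma map_src_eq_dropLast {D : MultiDigraph V E} {u v : V} {p : List E} (h : D.IsWalk u v p) :
    p.map D.src = (u :: p.map D.dst).dropLast := by
  induction p generalizing u with
  | nil => rfl
  | cons e p ih =>
      obtain ⟨h1, h2⟩ := h
      simp only [List.map_cons]
      rw [ih h2]
      cases p with
      | nil => simp [h1]
      | cons f q => simp [h1]

lemma trail_getLast {D : MultiDigraph V E} {u v : V} {p : List E} (h : D.IsWalk u v p) :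
    (u :: p.map D.dst).getLast (List.cons_ne_nil _ _) = v := by
  induction p generalizing u with
  | nil => cases h; rfl
  | cons e p ih =>
      obtain ⟨h1, h2⟩ := h
      have := ih h2
      simpa [List.getLast_cons] using this

lemma exists_last_arc {D : MultiDigraph V E} {u v : V} {p : List E} (h : D.IsWalk u v p)
    (hne : p ≠ []) : ∃ e ∈ p, D.dst e = v := by
  induction p generalizing u with
  | nil => exact absurd rfl hne
  | cons e p ih =>
      obtain ⟨h1, h2⟩ := h
      cases p with
      | nil => cases h2; exact ⟨e, by simp⟩
      | cons f q =>
          obtain ⟨g, hg, hgv⟩ := ih h2 (by simp)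
          exact ⟨g, by simp [hg], hgv⟩

/-- Split a walk at a vertex occurring in its trail. -/
lemma walk_split {D : MultiDigraph V E} {u v w : V} {p : List E} (h : D.IsWalk u v p)
    (hw : w ∈ u :: p.map D.dst) :
    ∃ p₁ p₂, p = p₁ ++ p₂ ∧ D.IsWalk u w p₁ ∧ D.IsWalk w v p₂ ∧
      (w :: p₂.map D.dst) <:+ (u :: p.map D.dst) := by
  induction p generalizing u with
  | nil =>
      obtain rfl : u = v := h
      simp only [List.map_nil, List.mem_singleton] at hw
      subst hw
      exact ⟨[], [], rfl, rfl, rfl, by simp⟩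
  | cons e p ih =>
      obtain ⟨h1, h2⟩ := h
      rcases eq_or_ne w u with rfl | hwu
      · exact ⟨[], e :: p, rfl, rfl, ⟨h1, h2⟩, List.suffix_refl _⟩
      · have hw' : w ∈ D.dst e :: p.map D.dst := by
          simpa [hwu] using hw
        obtain ⟨p₁, p₂, hps, hw1, hw2, hsuf⟩ := ih h2 hw'
        refine ⟨e :: p₁, p₂, by simp [hps], ⟨h1, hw1⟩, hw2, ?_⟩
        exact hsuf.trans ⟨[u], rfl⟩

/-- Any walk can be shortened to one whose vertex trail has no duplicates. -/
lemma shorten {D : MultiDigraph V E} {v : V} :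
    ∀ (p : List E) (u : V), D.IsWalk u v p →
    ∃ q, D.IsWalk u v q ∧ (∀ e ∈ q, e ∈ p) ∧ (u :: q.map D.dst).Nodup := by
  intro p
  induction p with
  | nil => rintro u rfl; exact ⟨[], rfl, by simp, by simp⟩
  | cons e p ih =>
      rintro u ⟨h1, h2⟩
      obtain ⟨q', hq'w, hq's, hq'n⟩ := ih (D.dst e) h2
      by_cases hu : u ∈ D.dst e :: q'.map D.dst
      · obtain ⟨p₁, p₂, hps, _, hw2, hsuf⟩ := walk_split hq'w hu
        refine ⟨p₂, hw2, ?_, ?_⟩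
        · intro f hf
          have : f ∈ q' := hps ▸ List.mem_append_right _ hf
          exact List.mem_cons_of_mem _ (hq's f this)
        · exact hsuf.sublist.nodup hq'n
      · exact ⟨e :: q', ⟨h1, hq'w⟩, by
          intro f hf
          rcases List.mem_cons.1 hf with rfl | hf
          · exact List.mem_cons_self
          · exact List.mem_cons_of_mem _ (hq's f hf), by simp [hq'n, hu]⟩

/-- arcs of a walk with nodup trail are nodup -/
lemma nodup_of_trail_nodup {D : MultiDigraph V E} {u v : V} {p : List E}
    (h : D.IsWalk u v p) (hn : (u :: p.map D.dst).Nodup) : p.Nodup := by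
  have h1 : (p.map D.src).Nodup := by
    rw [map_src_eq_dropLast h]
    exact hn.sublist (List.dropLast_sublist _)
  exact h1.of_map _

end MultiDigraph
namespace MultiDigraph
variable {V E : Type} [Fintype E] [DecidableEq V]

lemma excess_add (D : MultiDigraph V E) (x y : E → ℝ) (v : V) :
    D.excess (x + y) v = D.excess x v + D.excess y v := by
  simp only [excess, Pi.add_apply]
  rw [show (∑ e : E, if D.src e = v then x e + y e else 0)
      = (∑ e : E, if D.src e = v then x e else 0) + ∑ e : E, if D.src e = v then y e else 0 by
    rw [← Finset.sum_add_distrib]; congr 1; ext e; split <;> simp,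
    show (∑ e : E, if D.dst e = v then x e + y e else 0)
      = (∑ e : E, if D.dst e = v then x e else 0) + ∑ e : E, if D.dst e = v then y e else 0 by
    rw [← Finset.sum_add_distrib]; congr 1; ext e; split <;> simp]
  ring

lemma excess_sub (D : MultiDigraph V E) (x y : E → ℝ) (v : V) :
    D.excess (x - y) v = D.excess x v - D.excess y v := by
  have h := D.excess_add (x - y) y v
  rw [sub_add_cancel] at h
  linarith

lemma excess_zero (D : MultiDigraph V E) (v : V) : D.excess 0 v = 0 := by
  simp [excess]

lemma excess_sum (D : MultiDigraph V E) {ι : Type*} (S : Finset ι) (f : ι → E → ℝ) (v : V) :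
    D.excess (∑ i ∈ S, f i) v = ∑ i ∈ S, D.excess (f i) v := by
  induction S using Finset.cons_induction with
  | empty => simp [excess_zero]
  | cons i S hi ih =>
      rw [Finset.sum_cons, Finset.sum_cons, excess_add, ih]

lemma excess_single (D : MultiDigraph V E) [DecidableEq E] (e₀ : E) (r : ℝ) (v : V) :
    D.excess (fun e => if e = e₀ then r else 0) v
      = r * ((if D.src e₀ = v then (1:ℝ) else 0) - if D.dst e₀ = v then (1:ℝ) else 0) := by
  simp only [excess]
  rw [Finset.sum_eq_single e₀ (fun b _ hb => by simp [hb]) (by simp),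
      Finset.sum_eq_single e₀ (fun b _ hb => by simp [hb]) (by simp)]
  by_cases h1 : D.src e₀ = v <;> by_cases h2 : D.dst e₀ = v <;> simp [h1, h2]

lemma pathFlow_eq_sum [DecidableEq E] (p : List E) (r : ℝ) :
    pathFlow p r = ∑ e₀ ∈ p.toFinset, (fun e => if e = e₀ then r else 0) := by
  funext e
  simp only [pathFlow, Finset.sum_apply]
  by_cases he : e ∈ p
  · rw [if_pos he, Finset.sum_eq_single e]
    · simp
    · intro b _ hb; simp [Ne.symm hb, hb]
    · intro h; exact absurd (List.mem_toFinset.2 he) h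
  · rw [if_neg he, Finset.sum_eq_zero]
    intro b hb
    have : e ≠ b := fun h => he (h ▸ List.mem_toFinset.1 hb)
    simp [this]

/-- The src/dst count identity along a walk. -/
lemma walk_count {D : MultiDigraph V E} [DecidableEq E] {v w : V} :
    ∀ {p : List E} {u : V}, D.IsWalk u v p → p.Nodup →
    (∑ e₀ ∈ p.toFinset, ((if D.src e₀ = w then (1:ℝ) else 0) - if D.dst e₀ = w then (1:ℝ) else 0))
      = (if u = w then (1:ℝ) else 0) - if v = w then (1:ℝ) else 0 := by
  intro p
  induction p with
  | nil => rintro u rfl _; simp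
  | cons e p ih =>
      rintro u ⟨h1, h2⟩ hn
      have hep : e ∉ p := (List.nodup_cons.1 hn).1
      rw [List.toFinset_cons, Finset.sum_insert (by simpa using hep),
        ih h2 (List.nodup_cons.1 hn).2, h1]
      ring

lemma excess_pathFlow {D : MultiDigraph V E} [DecidableEq E] {u v : V} {p : List E}
    (h : D.IsWalk u v p) (hn : p.Nodup) (r : ℝ) (w : V) :
    D.excess (pathFlow p r) w
      = r * ((if u = w then (1:ℝ) else 0) - if v = w then (1:ℝ) else 0) := by
  rw [pathFlow_eq_sum, excess_sum]
  rw [← walk_count h hn, Finset.mul_sum]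
  exact Finset.sum_congr rfl fun e₀ _ => excess_single D e₀ r w

lemma excess_circulation {D : MultiDigraph V E} [DecidableEq E] {c : E → ℝ}
    (h : D.IsCirculation c) (w : V) : D.excess c w = 0 := by
  obtain ⟨n, C, r, hC, rfl⟩ := h
  rw [show (∑ i, pathFlow (C i) (r i)) = ∑ i ∈ Finset.univ, pathFlow (C i) (r i) from rfl,
    excess_sum]
  refine Finset.sum_eq_zero fun i _ => ?_
  obtain ⟨hne, hnd, u, hu⟩ := (hC i).1
  rw [excess_pathFlow hu hnd]
  ring

lemma circulation_nonneg {D : MultiDigraph V E} [DecidableEq E] {c : E → ℝ}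
    (h : D.IsCirculation c) (e : E) : 0 ≤ c e := by
  obtain ⟨n, C, r, hC, rfl⟩ := h
  rw [show (∑ i, pathFlow (C i) (r i)) e = ∑ i, pathFlow (C i) (r i) e from by
    simp [Finset.sum_apply]]
  refine Finset.sum_nonneg fun i _ => ?_
  unfold pathFlow
  split
  · exact le_of_lt (hC i).2
  · exact le_rfl

/-- Cut identity: sum of excesses over a finite vertex set. -/
lemma sum_excess (D : MultiDigraph V E) (x : E → ℝ) (S : Finset V) :
    ∑ v ∈ S, D.excess x v
      = (∑ e : E, if D.src e ∈ S ∧ D.dst e ∉ S then x e else 0)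
        - ∑ e : E, if D.dst e ∈ S ∧ D.src e ∉ S then x e else 0 := by
  have h1 : ∑ v ∈ S, ∑ e : E, (if D.src e = v then x e else 0)
      = ∑ e : E, if D.src e ∈ S then x e else 0 := by
    rw [Finset.sum_comm]
    refine Finset.sum_congr rfl fun e _ => ?_
    rw [Finset.sum_ite_eq S (D.src e) fun _ => x e]
  have h2 : ∑ v ∈ S, ∑ e : E, (if D.dst e = v then x e else 0)
      = ∑ e : E, if D.dst e ∈ S then x e else 0 := by
    rw [Finset.sum_comm]
    refine Finset.sum_congr rfl fun e _ => ?_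
    rw [Finset.sum_ite_eq S (D.dst e) fun _ => x e]
  simp only [excess, Finset.sum_sub_distrib]
  rw [h1, h2, ← Finset.sum_sub_distrib, ← Finset.sum_sub_distrib]
  refine Finset.sum_congr rfl fun e _ => ?_
  by_cases g1 : D.src e ∈ S <;> by_cases g2 : D.dst e ∈ S <;> simp [g1, g2]

/-- A finite vertex set containing all arc endpoints (and two designated vertices). -/
def bigSet (D : MultiDigraph V E) (s t : V) : Finset V :=
  insert s (insert t (Finset.univ.image D.src ∪ Finset.univ.image D.dst))

lemma src_mem_bigSet (D : MultiDigraph V E) (s t : V) (e : E) : D.src e ∈ D.bigSet s t := by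
  simp [bigSet]
lemma dst_mem_bigSet (D : MultiDigraph V E) (s t : V) (e : E) : D.dst e ∈ D.bigSet s t := by
  simp [bigSet]
lemma s_mem_bigSet (D : MultiDigraph V E) (s t : V) : s ∈ D.bigSet s t := by simp [bigSet]
lemma t_mem_bigSet (D : MultiDigraph V E) (s t : V) : t ∈ D.bigSet s t := by simp [bigSet]

lemma sum_excess_bigSet (D : MultiDigraph V E) (x : E → ℝ) (s t : V) :
    ∑ v ∈ D.bigSet s t, D.excess x v = 0 := by
  rw [sum_excess]
  rw [Finset.sum_eq_zero fun e _ => by simp [D.dst_mem_bigSet s t e],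
    Finset.sum_eq_zero fun e _ => by simp [D.src_mem_bigSet s t e], sub_zero]

/-- If conservation holds away from `s`, excess at `s` is zero. -/
lemma excess_eq_zero_of_cons (D : MultiDigraph V E) (x : E → ℝ) (s : V)
    (h : ∀ v, v ≠ s → D.excess x v = 0) : D.excess x s = 0 := by
  have h0 := D.sum_excess_bigSet x s s
  rwa [Finset.sum_eq_single_of_mem s (D.s_mem_bigSet s s)
    (fun v _ hv => h v hv)] at h0

/-- With conservation away from `s, t`, excesses at `s` and `t` are opposite. -/
lemma excess_s_add_t (D : MultiDigraph V E) (x : E → ℝ) (s t : V) (hst : s ≠ t)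
    (h : ∀ v, v ≠ s → v ≠ t → D.excess x v = 0) :
    D.excess x s + D.excess x t = 0 := by
  have h0 := D.sum_excess_bigSet x s t
  have hts : t ∈ (D.bigSet s t).erase s := Finset.mem_erase.2 ⟨Ne.symm hst, D.t_mem_bigSet s t⟩
  rw [← Finset.add_sum_erase _ _ (D.s_mem_bigSet s t), ← Finset.add_sum_erase _ _ hts,
    Finset.sum_eq_zero (fun v hv => h v (Finset.ne_of_mem_erase (Finset.mem_of_mem_erase hv))
      (Finset.ne_of_mem_erase hv))] at h0
  linarith

/-- If the out-sum at `v` is positive, there is an arc out of `v` with positive value. -/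
lemma exists_pos_out (D : MultiDigraph V E) (x : E → ℝ) (v : V)
    (h : 0 < ∑ e : E, if D.src e = v then x e else 0) :
    ∃ e, 0 < x e ∧ D.src e = v := by
  by_contra hc
  push_neg at hc
  refine absurd h (not_lt.2 (Finset.sum_nonpos fun e _ => ?_))
  split
  · rename_i hs
    by_contra h'
    exact absurd (hc e (by push_neg at h'; linarith) ) (by simp [hs])
  · exact le_rfl

lemma insum_nonneg (D : MultiDigraph V E) {x : E → ℝ} (hx : ∀ e, 0 ≤ x e) (v : V) :
    0 ≤ ∑ e : E, if D.dst e = v then x e else 0 :=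
  Finset.sum_nonneg fun e _ => by split <;> simp [hx e]

lemma outsum_pos_of_excess_pos (D : MultiDigraph V E) {x : E → ℝ} (hx : ∀ e, 0 ≤ x e) {v : V}
    (h : 0 < D.excess x v) : ∃ e, 0 < x e ∧ D.src e = v := by
  refine D.exists_pos_out x v ?_
  have := D.insum_nonneg hx v
  unfold excess at h
  linarith

lemma outsum_pos_of_in (D : MultiDigraph V E) {x : E → ℝ} (hx : ∀ e, 0 ≤ x e) {v : V}
    (h : D.excess x v = 0) {e₀ : E} (he : 0 < x e₀) (hd : D.dst e₀ = v) :
    ∃ e, 0 < x e ∧ D.src e = v := by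
  refine D.exists_pos_out x v ?_
  have hin : x e₀ ≤ ∑ e : E, if D.dst e = v then x e else 0 := by
    have := Finset.single_le_sum (f := fun e => if D.dst e = v then x e else 0)
      (fun e _ => by split <;> simp [hx e]) (Finset.mem_univ e₀)
    simpa [hd] using this
  unfold excess at h
  linarith

end MultiDigraph
namespace MultiDigraph
variable {V E : Type} [Fintype E] [DecidableEq V]

lemma isCirculation_zero (D : MultiDigraph V E) [DecidableEq E] : D.IsCirculation 0 :=
  ⟨0, Fin.elim0, Fin.elim0, fun i => i.elim0, by simp⟩

lemma IsCirculation.add_cycle {D : MultiDigraph V E} [DecidableEq E] {c : E → ℝ}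
    (h : D.IsCirculation c) {q : List E} (hq : D.IsCycle q) {r : ℝ} (hr : 0 < r) :
    D.IsCirculation (c + pathFlow q r) := by
  obtain ⟨n, C, rr, hC, rfl⟩ := h
  refine ⟨n + 1, Fin.cons q C, Fin.cons r rr, ?_, ?_⟩
  · intro i
    refine Fin.cases ?_ ?_ i
    · exact ⟨hq, hr⟩
    · intro j; exact hC j
  · rw [Fin.sum_univ_succ]
    simp only [Fin.cons_zero, Fin.cons_succ]
    rw [add_comm]

lemma IsCirculation.add {D : MultiDigraph V E} [DecidableEq E] {c d : E → ℝ}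
    (h : D.IsCirculation c) (h' : D.IsCirculation d) : D.IsCirculation (c + d) := by
  obtain ⟨n, C, r, hC, rfl⟩ := h
  obtain ⟨m, B, u, hB, rfl⟩ := h'
  refine ⟨n + m, Fin.append C B, Fin.append r u, ?_, ?_⟩
  · intro i
    refine Fin.addCases ?_ ?_ i
    · intro j; simpa [Fin.append_left] using hC j
    · intro j; simpa [Fin.append_right] using hB j
  · rw [Fin.sum_univ_add]
    congr 1
    · exact Finset.sum_congr rfl fun j _ => by simp [Fin.append_left]
    · exact Finset.sum_congr rfl fun j _ => by simp [Fin.append_right]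

lemma findPC_aux (D : MultiDigraph V E) (avail : E → Prop) (u₀ t₀ : V)
    (Hstep : ∀ v, v ≠ t₀ → (∃ e, avail e ∧ D.dst e = v) → ∃ e, avail e ∧ D.src e = v) :
    ∀ (fuel : ℕ) (q : List E) (u : V), D.IsWalk u₀ u q → q ≠ [] → (∀ e ∈ q, avail e) →
    (u₀ :: q.map D.dst).Nodup → Fintype.card E + 1 ≤ q.length + fuel →
    (∃ p, D.IsPath u₀ t₀ p ∧ p ≠ [] ∧ ∀ e ∈ p, avail e) ∨
    (∃ p, D.IsCycle p ∧ ∀ e ∈ p, avail e) := by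
  intro fuel
  induction fuel with
  | zero =>
      intro q u hw hne hav hnd hlen
      exfalso
      have : q.length ≤ Fintype.card E := (nodup_of_trail_nodup hw hnd).length_le_card
      omega
  | succ fuel ih =>
      intro q u hw hne hav hnd hlen
      by_cases hu : u = t₀
      · exact Or.inl ⟨q, ⟨hu ▸ hw, nodup_of_trail_nodup hw hnd⟩, hne, hav⟩
      · obtain ⟨e₁, he₁q, he₁⟩ := exists_last_arc hw hne
        obtain ⟨e, hea, hes⟩ := Hstep u hu ⟨e₁, hav _ he₁q, he₁⟩
        by_cases hv : D.dst e ∈ u₀ :: q.map D.dst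
        · right
          obtain ⟨p₁, p₂, hsplit, hw1, hw2, hsuf⟩ := walk_split hw hv
          have hcw : D.IsWalk (D.dst e) (D.dst e) (p₂ ++ [e]) :=
            isWalk_append hw2 ⟨hes, rfl⟩
          have hnd₂ : (D.dst e :: p₂.map D.dst).Nodup := hsuf.sublist.nodup hnd
          have hnd' : (p₂ ++ [e]).Nodup := by
            have hms := map_src_eq_dropLast hcw
            have hdl : (D.dst e :: (p₂ ++ [e]).map D.dst).dropLast = D.dst e :: p₂.map D.dst := by
              rw [show D.dst e :: (p₂ ++ [e]).map D.dst
                  = (D.dst e :: p₂.map D.dst) ++ [D.dst e] by simp]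
              exact List.dropLast_concat ..
            rw [hdl] at hms
            exact List.Nodup.of_map _ (hms ▸ hnd₂)
          refine ⟨p₂ ++ [e], ⟨by simp, hnd', D.dst e, hcw⟩, ?_⟩
          intro f hf
          rcases List.mem_append.1 hf with hf | hf
          · exact hav f (hsplit ▸ List.mem_append_right _ hf)
          · rw [List.mem_singleton.1 hf]; exact hea
        · refine ih (q ++ [e]) (D.dst e) (isWalk_append hw ⟨hes, rfl⟩) (by simp) ?_ ?_ ?_
          · intro f hf
            rcases List.mem_append.1 hf with hf | hf
            · exact hav f hf
            · rw [List.mem_singleton.1 hf]; exact hea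
          · have heq : u₀ :: (q ++ [e]).map D.dst = (u₀ :: q.map D.dst) ++ [D.dst e] := by simp
            rw [heq]
            rw [List.nodup_append]
            refine ⟨hnd, by simp, ?_⟩
            intro a ha b hb hab
            simp only [List.mem_singleton] at hb
            rw [hab, hb] at ha
            exact hv ha
          · simp only [List.length_append, List.length_singleton]
            omega

end MultiDigraph
namespace MultiDigraph
variable {V E : Type} [Fintype E] [DecidableEq V]

lemma findPC (D : MultiDigraph V E) (avail : E → Prop) (t₀ : V) (e₀ : E) (h₀ : avail e₀)
    (Hstep : ∀ v, v ≠ t₀ → (∃ e, avail e ∧ D.dst e = v) → ∃ e, avail e ∧ D.src e = v) :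
    (∃ p, D.IsPath (D.src e₀) t₀ p ∧ p ≠ [] ∧ ∀ e ∈ p, avail e) ∨
    (∃ p, D.IsCycle p ∧ ∀ e ∈ p, avail e) := by
  by_cases hl : D.dst e₀ = D.src e₀
  · exact Or.inr ⟨[e₀], ⟨by simp, by simp, D.src e₀, rfl, hl⟩, by simp [h₀]⟩
  · refine D.findPC_aux avail (D.src e₀) t₀ Hstep (Fintype.card E) [e₀] (D.dst e₀)
      ⟨rfl, rfl⟩ (by simp) (by simp [h₀]) (by simp only [List.map_cons, List.map_nil, List.nodup_cons, List.not_mem_nil, not_false_iff, List.nodup_nil, and_true, List.mem_singleton]; exact fun h => hl h.symm) (by rw [List.length_singleton]; omega)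

lemma findCycle (D : MultiDigraph V E) (avail : E → Prop) (e₀ : E) (h₀ : avail e₀)
    (Hstep : ∀ v, (∃ e, avail e ∧ D.dst e = v) → ∃ e, avail e ∧ D.src e = v) :
    ∃ p, D.IsCycle p ∧ ∀ e ∈ p, avail e := by
  rcases D.findPC avail (D.src e₀) e₀ h₀ (fun v hv h => Hstep v h) with ⟨p, hp, hne, hav⟩ | h
  · exact ⟨p, ⟨hne, hp.2, _, hp.1⟩, hav⟩
  · exact h

/-- Main decomposition lemma. -/
lemma decompose (D : MultiDigraph V E) [DecidableEq E] (s t : V) (c : ℝ) (hc : 0 < c) :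
    ∀ (N : ℕ) (n : E → ℕ), (∑ e : E, n e) = N → ∀ (p : ℕ),
    (∀ v, v ≠ s → v ≠ t → D.excess (fun e => (n e : ℝ) * c) v = 0) →
    D.excess (fun e => (n e : ℝ) * c) s = (p : ℝ) * c →
    ∃ (P : Fin p → List E) (circ : E → ℝ), D.IsCirculation circ ∧
      (∀ i, D.IsPath s t (P i)) ∧
      (fun e => (n e : ℝ) * c) = circ + ∑ i, pathFlow (P i) c := by
  intro N
  induction N using Nat.strong_induction_on with
  | _ N ih =>
  intro n hN p hcons hex
  set w : E → ℝ := fun e => (n e : ℝ) * c with hwdef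
  have hwnn : ∀ e, 0 ≤ w e := fun e => mul_nonneg (Nat.cast_nonneg _) hc.le
  have hpos : ∀ e, 0 < w e → 1 ≤ n e := by
    intro e he
    by_contra h'
    push_neg at h'
    interval_cases h : n e
    · simp [hwdef, h] at he
  -- subtraction construction
  have key : ∀ q : List E, q.Nodup → (∀ e ∈ q, 0 < w e) →
      ∃ n' : E → ℕ, (fun e => (n' e : ℝ) * c) = w - pathFlow q c ∧
        (q ≠ [] → ∑ e : E, n' e < ∑ e : E, n e) := by
    intro q hnd hq
    refine ⟨fun e => n e - (if e ∈ q then 1 else 0), ?_, ?_⟩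
    · funext e
      by_cases he : e ∈ q
      · have h1 : 1 ≤ n e := hpos e (hq e he)
        simp only [he, if_pos, Pi.sub_apply, pathFlow, if_pos he]
        rw [Nat.cast_sub h1]
        ring
      · simp [he, pathFlow, hwdef]
    · intro hne
      obtain ⟨e₁, he₁⟩ := List.exists_mem_of_ne_nil q hne
      refine Finset.sum_lt_sum (fun e _ => Nat.sub_le _ _) ⟨e₁, Finset.mem_univ e₁, ?_⟩
      have h1 : 1 ≤ n e₁ := hpos e₁ (hq e₁ he₁)
      simp only [he₁, if_pos]
      omega
  by_cases hz : ∀ e, n e = 0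
  · have hw0 : w = 0 := funext fun e => by simp [hwdef, hz e]
    have hp0 : p = 0 := by
      have h0 : (p : ℝ) * c = 0 := by rw [← hex, hw0, excess_zero]
      rcases mul_eq_zero.1 h0 with h' | h'
      · exact_mod_cast h'
      · exact absurd h' (ne_of_gt hc)
    subst hp0
    refine ⟨Fin.elim0, 0, D.isCirculation_zero, fun i => i.elim0, ?_⟩
    rw [hw0]
    simp
  · push_neg at hz
    obtain ⟨e₀, he₀⟩ := hz
    have he₀w : 0 < w e₀ := by
      have : 0 < n e₀ := Nat.pos_of_ne_zero he₀
      exact mul_pos (by exact_mod_cast this) hc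
    match p with
    | 0 =>
      -- circulation case: all vertices balanced
      have hexs : D.excess w s = 0 := by simpa using hex
      have hbal : ∀ v, D.excess w v = 0 := by
        intro v
        by_cases hvs : v = s
        · exact hvs ▸ hexs
        by_cases hvt : v = t
        · subst hvt
          by_cases hst : s = v
          · exact hst ▸ hexs
          · have := D.excess_s_add_t w s v (fun h => hst h) hcons
            linarith
        · exact hcons v hvs hvt
      obtain ⟨q, hcyc, hav⟩ := D.findCycle (fun e => 0 < w e) e₀ he₀w
        (fun v ⟨e, he, hd⟩ => D.outsum_pos_of_in hwnn (hbal v) he hd)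
      obtain ⟨n', hn', hlt⟩ := key q hcyc.2.1 hav
      obtain ⟨hqne, hqnd, u, hqw⟩ := hcyc
      have hcons' : ∀ v, v ≠ s → v ≠ t → D.excess (fun e => (n' e : ℝ) * c) v = 0 := by
        intro v hvs hvt
        rw [hn', excess_sub, excess_pathFlow hqw hqnd, hbal v]
        ring
      have hex' : D.excess (fun e => (n' e : ℝ) * c) s = (0 : ℕ) * c := by
        rw [hn', excess_sub, excess_pathFlow hqw hqnd, hexs]
        push_cast
        ring
      obtain ⟨P, circ, hcirc, hP, heq⟩ := ih _ (hN ▸ hlt hqne) n' rfl 0 hcons' hex'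
      refine ⟨P, circ + pathFlow q c, hcirc.add_cycle ⟨hqne, hqnd, u, hqw⟩ hc, hP, ?_⟩
      have : w = (fun e => (n' e : ℝ) * c) + pathFlow q c := by
        rw [hn']; funext e; simp
      rw [this, heq]
      funext e
      simp only [Pi.add_apply, Finset.sum_apply]
      ring
    | p' + 1 =>
      have hst : s ≠ t := by
        rintro rfl
        have h0 : D.excess w s = 0 :=
          D.excess_eq_zero_of_cons w s (fun v hv => hcons v hv hv)
        rw [hex] at h0
        have : (0:ℝ) < ((p' + 1 : ℕ) : ℝ) * c := by positivity
        linarith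
      have hexpos : 0 < D.excess w s := by
        rw [hex]
        positivity
      obtain ⟨e₁, he₁w, he₁s⟩ := D.outsum_pos_of_excess_pos hwnn hexpos
      have Hstep : ∀ v, v ≠ t → (∃ e, 0 < w e ∧ D.dst e = v) → ∃ e, 0 < w e ∧ D.src e = v := by
        intro v hvt ⟨e, he, hd⟩
        by_cases hvs : v = s
        · exact hvs ▸ D.outsum_pos_of_excess_pos hwnn hexpos
        · exact D.outsum_pos_of_in hwnn (hcons v hvs hvt) he hd
      rcases D.findPC (fun e => 0 < w e) t e₁ he₁w Hstep with ⟨q, hqp, hqne, hav⟩ | ⟨q, hcyc, hav⟩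
      · -- path case
        rw [he₁s] at hqp
        obtain ⟨hqw, hqnd⟩ := hqp
        obtain ⟨n', hn', hlt⟩ := key q hqnd hav
        have hcons' : ∀ v, v ≠ s → v ≠ t → D.excess (fun e => (n' e : ℝ) * c) v = 0 := by
          intro v hvs hvt
          rw [hn', excess_sub, excess_pathFlow hqw hqnd, hcons v hvs hvt,
            if_neg (fun h => hvs h.symm), if_neg (fun h => hvt h.symm)]
          ring
        have hex' : D.excess (fun e => (n' e : ℝ) * c) s = (p' : ℝ) * c := by
          rw [hn', excess_sub, excess_pathFlow hqw hqnd, hex,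
            if_pos rfl, if_neg (fun h => hst h.symm)]
          push_cast
          ring
        obtain ⟨P, circ, hcirc, hP, heq⟩ := ih _ (hN ▸ hlt hqne) n' rfl p' hcons' hex'
        refine ⟨Fin.cons q P, circ, hcirc, ?_, ?_⟩
        · intro i
          refine Fin.cases ?_ ?_ i
          · exact ⟨hqw, hqnd⟩
          · intro j; exact hP j
        · have hw' : w = (fun e => (n' e : ℝ) * c) + pathFlow q c := by
            rw [hn']; funext e; simp
          rw [hw', heq, Fin.sum_univ_succ]
          simp only [Fin.cons_zero, Fin.cons_succ]
          funext e
          simp only [Pi.add_apply, Finset.sum_apply]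
          ring
      · -- cycle case
        obtain ⟨n', hn', hlt⟩ := key q hcyc.2.1 hav
        obtain ⟨hqne, hqnd, u, hqw⟩ := hcyc
        have hcons' : ∀ v, v ≠ s → v ≠ t → D.excess (fun e => (n' e : ℝ) * c) v = 0 := by
          intro v hvs hvt
          rw [hn', excess_sub, excess_pathFlow hqw hqnd, hcons v hvs hvt]
          ring
        have hex' : D.excess (fun e => (n' e : ℝ) * c) s = ((p' + 1 : ℕ) : ℝ) * c := by
          rw [hn', excess_sub, excess_pathFlow hqw hqnd, hex]
          ring
        obtain ⟨P, circ, hcirc, hP, heq⟩ := ih _ (hN ▸ hlt hqne) n' rfl (p' + 1) hcons' hex'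
        refine ⟨P, circ + pathFlow q c, hcirc.add_cycle ⟨hqne, hqnd, u, hqw⟩ hc, hP, ?_⟩
        have hw' : w = (fun e => (n' e : ℝ) * c) + pathFlow q c := by
          rw [hn']; funext e; simp
        rw [hw', heq]
        funext e
        simp only [Pi.add_apply, Finset.sum_apply]
        ring

end MultiDigraph
namespace MultiDigraph
variable {V E : Type}

/-- Residual reachability. -/
inductive Reach (D : MultiDigraph V E) (avail : E → Prop) (s : V) : V → Prop
  | base : Reach D avail s s
  | step {e : E} : Reach D avail s (D.src e) → avail e → Reach D avail s (D.dst e)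

lemma reach_walk {D : MultiDigraph V E} {avail : E → Prop} {s v : V}
    (h : Reach D avail s v) : ∃ p, D.IsWalk s v p ∧ ∀ e ∈ p, avail e := by
  induction h with
  | base => exact ⟨[], rfl, by simp⟩
  | @step e h ha ih =>
      obtain ⟨p, hp, hav⟩ := ih
      refine ⟨p ++ [e], isWalk_append hp ⟨rfl, rfl⟩, ?_⟩
      intro f hf
      rcases List.mem_append.1 hf with hf | hf
      · exact hav f hf
      · rw [List.mem_singleton.1 hf]; exact ha

/-- The residual multidigraph: forward and backward copies of each arc. -/
def residual (D : MultiDigraph V E) : MultiDigraph V (E ⊕ E) where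
  src := Sum.elim D.src D.dst
  dst := Sum.elim D.dst D.src

variable [Fintype E] [DecidableEq V]

/-- Existence of a `{0,a}`-valued maximum flow when all capacities are `0` or `a`. -/
lemma exists_int_maxflow (D : MultiDigraph V E) [DecidableEq E] (s t : V) (hst : s ≠ t)
    (u' : E → ℝ) (a : ℝ) (ha : 0 < a) (hu : ∀ e, u' e = 0 ∨ u' e = a) :
    ∃ F : Finset E, (∀ e ∈ F, u' e = a) ∧
      D.IsSTFlow s t (fun e => if e ∈ F then a else 0) ∧
      D.IsFlowUnder u' (fun e => if e ∈ F then a else 0) ∧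
      ∀ z, D.IsFlowUnder u' z → D.IsSTFlow s t z →
        D.excess z s ≤ D.excess (fun e => if e ∈ F then a else 0) s := by
  classical
  set Valid : Finset E → Prop := fun F => (∀ e ∈ F, u' e = a) ∧
    (∀ v, v ≠ s → v ≠ t → D.excess (fun e => if e ∈ F then a else 0) v = 0) with hValid
  have h0 : Valid ∅ := by
    constructor
    · simp
    · intro v _ _
      have : (fun e : E => if e ∈ (∅ : Finset E) then a else 0) = 0 := by funext e; simp
      rw [this, excess_zero]
  obtain ⟨F, hFmem, hFmax⟩ := Finset.exists_max_image
    (Finset.univ.filter Valid)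
    (fun F => D.excess (fun e => if e ∈ F then a else 0) s)
    ⟨∅, Finset.mem_filter.2 ⟨Finset.mem_univ _, h0⟩⟩
  have hFvalid : Valid F := (Finset.mem_filter.1 hFmem).2
  set y : E → ℝ := fun e => if e ∈ F then a else 0 with hy
  have hynn : ∀ e, 0 ≤ y e := fun e => by
    rw [hy]; dsimp only; split
    · exact ha.le
    · exact le_rfl
  have hyflow : D.IsSTFlow s t y := ⟨hynn, hFvalid.2⟩
  have hyunder : D.IsFlowUnder u' y := by
    intro e
    refine ⟨hynn e, ?_⟩
    have h0u : 0 ≤ u' e := by rcases hu e with h | h <;> simp [h, ha.le]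
    rw [hy]; dsimp only
    split
    · rename_i he; rw [hFvalid.1 e he]
    · exact h0u
  set avail' : E ⊕ E → Prop := Sum.elim (fun e => e ∉ F ∧ u' e = a) (fun e => e ∈ F)
    with havail
  by_cases hreach : Reach D.residual avail' s t
  · -- augmenting path exists: contradiction with maximality of F
    exfalso
    obtain ⟨p₀, hp₀, hav₀⟩ := reach_walk hreach
    obtain ⟨q, hqw, hqsub, hqnd'⟩ := shorten p₀ s hp₀
    have hqav : ∀ ra ∈ q, avail' ra := fun ra hra => hav₀ ra (hqsub ra hra)
    have hqnd : q.Nodup := nodup_of_trail_nodup hqw hqnd'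
    have hexcl : ∀ e : E, ¬(Sum.inl e ∈ q ∧ Sum.inr e ∈ q) := by
      rintro e ⟨h1, h2⟩
      have ha1 := hqav _ h1
      have ha2 := hqav _ h2
      rw [havail] at ha1 ha2
      simp only [Sum.elim_inl] at ha1
      simp only [Sum.elim_inr] at ha2
      exact ha1.1 ha2
    set F' : Finset E := (F \ (Finset.univ : Finset E).filter (fun e => (Sum.inr e : E ⊕ E) ∈ q.toFinset))
      ∪ (Finset.univ : Finset E).filter (fun e => (Sum.inl e : E ⊕ E) ∈ q.toFinset) with hF'
    set δ : E → ℝ := fun e => if (Sum.inl e : E ⊕ E) ∈ q.toFinset then a else if (Sum.inr e : E ⊕ E) ∈ q.toFinset then -a else 0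
      with hδ
    set g : E ⊕ E → E → ℝ := fun ra e =>
      (if ra = Sum.inl e then a else 0) + (if ra = Sum.inr e then -a else 0) with hg
    have hδsum : δ = ∑ ra ∈ q.toFinset, g ra := by
      funext e
      rw [show (∑ ra ∈ q.toFinset, g ra) e = ∑ ra ∈ q.toFinset, g ra e from by
        simp [Finset.sum_apply]]
      simp only [hg]
      rw [Finset.sum_add_distrib, Finset.sum_ite_eq' q.toFinset (Sum.inl e) fun _ => a,
        Finset.sum_ite_eq' q.toFinset (Sum.inr e) fun _ => (-a)]
      simp only [hδ]
      by_cases h1 : (Sum.inl e : E ⊕ E) ∈ q.toFinset <;>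
        by_cases h2 : (Sum.inr e : E ⊕ E) ∈ q.toFinset
      · exact absurd ⟨List.mem_toFinset.1 h1, List.mem_toFinset.1 h2⟩ (hexcl e)
      all_goals simp [h1, h2]
    have hgex : ∀ ra, ∀ v, D.excess (g ra) v
        = a * ((if D.residual.src ra = v then (1:ℝ) else 0)
          - if D.residual.dst ra = v then (1:ℝ) else 0) := by
      rintro (f | f) v
      · have : g (Sum.inl f) = fun e => if e = f then a else 0 := by
          funext e
          simp only [hg]
          rcases eq_or_ne e f with rfl | h
          · simp
          · simp [h, Ne.symm h]
        rw [this, excess_single]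
        simp [residual]
        exact Or.inl rfl
      · have : g (Sum.inr f) = fun e => if e = f then -a else 0 := by
          funext e
          simp only [hg]
          rcases eq_or_ne e f with rfl | h
          · simp
          · simp [h, Ne.symm h]
        rw [this, excess_single]
        show -a * (_ - _) = a * ((if D.dst f = v then (1:ℝ) else 0) - if D.src f = v then (1:ℝ) else 0)
        ring
    have hδex : ∀ v, D.excess δ v
        = a * ((if s = v then (1:ℝ) else 0) - if t = v then (1:ℝ) else 0) := by
      intro v
      rw [hδsum, excess_sum]
      rw [show ∑ ra ∈ q.toFinset, D.excess (g ra) v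
          = a * ∑ ra ∈ q.toFinset, ((if D.residual.src ra = v then (1:ℝ) else 0)
            - if D.residual.dst ra = v then (1:ℝ) else 0) from by
        rw [Finset.mul_sum]; exact Finset.sum_congr rfl fun ra _ => hgex ra v]
      rw [walk_count hqw hqnd]
    have hy' : (fun e => if e ∈ F' then a else 0) = y + δ := by
      funext e
      by_cases h1 : (Sum.inl e : E ⊕ E) ∈ q.toFinset
      · have he1 : e ∉ F :=
          ((by simpa [havail] using hqav _ (List.mem_toFinset.1 h1) : _ ∧ _)).1
        simp [hF', hδ, hy, List.mem_toFinset.1 h1, he1]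
      · by_cases h2 : (Sum.inr e : E ⊕ E) ∈ q.toFinset
        · have he2 : e ∈ F := by simpa [havail] using hqav _ (List.mem_toFinset.1 h2)
          simp [hF', hδ, hy, mt List.mem_toFinset.2 h1, List.mem_toFinset.1 h2, he2]
        · by_cases he : e ∈ F <;> simp [hF', hδ, hy, mt List.mem_toFinset.2 h1, mt List.mem_toFinset.2 h2, he]
    have hvalid' : Valid F' := by
      constructor
      · intro e he
        rw [hF'] at he
        rcases Finset.mem_union.1 he with he | he
        · exact hFvalid.1 e (Finset.mem_sdiff.1 he).1
        · exact ((by simpa [havail] using hqav _ (List.mem_toFinset.1 (Finset.mem_filter.1 he).2) : _ ∧ _)).2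
      · intro v hvs hvt
        rw [hy', excess_add, hFvalid.2 v hvs hvt, hδex v,
          if_neg (fun h => hvs h.symm), if_neg (fun h => hvt h.symm)]
        ring
    have hgain : D.excess (fun e => if e ∈ F' then a else 0) s = D.excess y s + a := by
      rw [hy', excess_add, hδex s, if_pos rfl, if_neg (fun h => hst h.symm)]
      ring
    have := hFmax F' (Finset.mem_filter.2 ⟨Finset.mem_univ _, hvalid'⟩)
    rw [hgain] at this
    linarith
  · -- no augmenting path: cut argument
    refine ⟨F, hFvalid.1, hyflow, hyunder, ?_⟩
    intro z hzu hzf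
    set R : Set V := Reach D.residual avail' s with hR
    set Sfin : Finset V := (D.bigSet s t).filter (· ∈ R) with hSfin
    have hcross : ∀ (x : E → ℝ),
        (∀ v, v ≠ s → v ≠ t → D.excess x v = 0) →
        D.excess x s = (∑ e : E, if D.src e ∈ Sfin ∧ D.dst e ∉ Sfin then x e else 0)
          - ∑ e : E, if D.dst e ∈ Sfin ∧ D.src e ∉ Sfin then x e else 0 := by
      intro x hcons
      rw [← sum_excess]
      rw [Finset.sum_eq_single_of_mem s]
      · exact Finset.mem_filter.2 ⟨D.s_mem_bigSet s t, Reach.base⟩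
      · intro v hv hvs
        refine hcons v hvs ?_
        rintro rfl
        exact hreach (Finset.mem_filter.1 hv).2
    have hsrcS : ∀ e : E, D.src e ∈ Sfin ↔ D.src e ∈ R := by
      intro e
      simp [hSfin, D.src_mem_bigSet s t e]
    have hdstS : ∀ e : E, D.dst e ∈ Sfin ↔ D.dst e ∈ R := by
      intro e
      simp [hSfin, D.dst_mem_bigSet s t e]
    have hfwd : ∀ e : E, D.src e ∈ R → D.dst e ∉ R → y e = u' e := by
      intro e h1 h2
      have hnav : ¬avail' (Sum.inl e) := fun hav => h2 (Reach.step (e := Sum.inl e) h1 hav)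
      rw [havail] at hnav
      simp only [Sum.elim_inl, not_and_or, not_not] at hnav
      rcases hnav with h | h
      · rw [hy]; simp only [h, if_pos]; exact (hFvalid.1 e h).symm
      · rcases hu e with h' | h'
        · rw [h', hy]
          dsimp only
          split
          · rename_i hmem; rw [hFvalid.1 e hmem] at h'; exact absurd h'.symm (ne_of_gt ha).symm
          · rfl
        · exact absurd h' h
    have hbwd : ∀ e : E, D.dst e ∈ R → D.src e ∉ R → y e = 0 := by
      intro e h1 h2
      have hnav : ¬avail' (Sum.inr e) := fun hav => h2 (Reach.step (e := Sum.inr e) h1 hav)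
      rw [havail] at hnav
      simp only [Sum.elim_inr] at hnav
      rw [hy]
      simp [hnav]
    rw [hcross z hzf.2, hcross y hyflow.2]
    have h1 : (∑ e : E, if D.src e ∈ Sfin ∧ D.dst e ∉ Sfin then z e else 0)
        ≤ ∑ e : E, if D.src e ∈ Sfin ∧ D.dst e ∉ Sfin then y e else 0 := by
      refine Finset.sum_le_sum fun e _ => ?_
      split
      · rename_i h
        rw [hfwd e ((hsrcS e).1 h.1) (fun h' => h.2 ((hdstS e).2 h'))]
        exact (hzu e).2
      · exact le_rfl
    have h2 : (0:ℝ) ≤ ∑ e : E, if D.dst e ∈ Sfin ∧ D.src e ∉ Sfin then z e else 0 := by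
      refine Finset.sum_nonneg fun e _ => ?_
      split
      · exact (hzu e).1
      · exact le_rfl
    have h3 : (∑ e : E, if D.dst e ∈ Sfin ∧ D.src e ∉ Sfin then y e else 0) = 0 := by
      refine Finset.sum_eq_zero fun e _ => ?_
      split
      · rename_i h
        exact hbwd e ((hdstS e).1 h.1) (fun h' => h.2 ((hsrcS e).2 h'))
      · rfl
    rw [h3]
    linarith

end MultiDigraph

/-- Two-value case with divisibility: if the `(s,t)`-flow `x` has exactly the two
distinct positive arc values `a > b` with `b ∣ a`, then the minimum number of path
flows needed to decompose `x` (apart from a circulation) is `p₁ + p₂`, where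
`p₁ = |x_a|/a` for a maximum `(s,t)`-flow `x_a` in the support network restricted to
arcs of flow value at least `a` (with capacities `x`), and `p₂ = |x − x_a|/b`. -/
theorem stmt8 {V E : Type} [Fintype E] [DecidableEq V] [DecidableEq E]
    (D : MultiDigraph V E) (s t : V) (a b : ℕ) (hb : 0 < b) (hba : b < a) (hdvd : b ∣ a)
    (x : E → ℝ) (hflow : D.IsSTFlow s t x)
    (hvals : ∀ e, x e = 0 ∨ x e = (a : ℝ) ∨ x e = (b : ℝ))
    (hea : ∃ e, x e = (a : ℝ)) (heb : ∃ e, x e = (b : ℝ))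
    (xa : E → ℝ)
    (hxa : D.IsMaxFlow (fun e => if (a : ℝ) ≤ x e then x e else 0) s t xa)
    (p₁ p₂ : ℕ)
    (hp₁ : (p₁ : ℝ) * a = D.excess xa s)
    (hp₂ : (p₂ : ℝ) * b = D.excess (x - xa) s) :
    IsLeast {k : ℕ | D.SplittableC s t x k} (p₁ + p₂) := by
  classical
  have hb0 : (0:ℝ) < b := by exact_mod_cast hb
  have ha0 : (0:ℝ) < a := by exact_mod_cast hb.trans hba
  have hba0 : (b:ℝ) < a := by exact_mod_cast hba
  obtain ⟨m, hm⟩ := hdvd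
  set u' : E → ℝ := fun e => if (a : ℝ) ≤ x e then x e else 0 with hu'def
  have hu' : ∀ e, u' e = 0 ∨ u' e = a := by
    intro e
    rw [hu'def]; dsimp only
    rcases hvals e with h | h | h
    · left; rw [h]; split_ifs <;> rfl
    · right; rw [h, if_pos le_rfl]
    · left; rw [h, if_neg (not_le.2 hba0)]
  have hxea : ∀ e, u' e = (a:ℝ) → x e = a := by
    intro e he
    rw [hu'def] at he; dsimp only at he
    rcases hvals e with h | h | h
    · exfalso; rw [h, if_neg (not_le.2 ha0)] at he; linarith
    · exact h
    · exfalso; rw [h, if_neg (not_le.2 hba0)] at he; linarith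
  rcases eq_or_ne s t with rfl | hst
  · -- degenerate case s = t
    have hxa0 : D.excess xa s = 0 :=
      D.excess_eq_zero_of_cons xa s (fun v hv => hxa.2.1.2 v hv hv)
    have hx0 : D.excess x s = 0 :=
      D.excess_eq_zero_of_cons x s (fun v hv => hflow.2 v hv hv)
    have hp10 : p₁ = 0 := by
      rw [hxa0] at hp₁
      rcases mul_eq_zero.1 hp₁ with h | h
      · exact_mod_cast h
      · exact absurd h (ne_of_gt ha0)
    have hp20 : p₂ = 0 := by
      rw [excess_sub, hxa0, hx0] at hp₂
      simp only [sub_zero] at hp₂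
      rcases mul_eq_zero.1 hp₂ with h | h
      · exact_mod_cast h
      · exact absurd h (ne_of_gt hb0)
    subst hp10; subst hp20
    constructor
    · -- x is a circulation
      have hn : ∀ e, ∃ n : ℕ, x e = (n : ℝ) * b := by
        intro e
        rcases hvals e with h | h | h
        · exact ⟨0, by simp [h]⟩
        · exact ⟨m, by rw [h, hm]; push_cast; ring⟩
        · exact ⟨1, by simp [h]⟩
      choose n hn using hn
      have hxn : (fun e => (n e : ℝ) * b) = x := funext fun e => (hn e).symm
      obtain ⟨P, circ, hcirc, hP, heq⟩ := D.decompose s s (b:ℝ) hb0 (∑ e, n e) n rfl 0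
        (by rw [hxn]; exact fun v hv _ => hflow.2 v hv hv)
        (by rw [hxn]; simpa using hx0)
      refine ⟨Fin.elim0, Fin.elim0, circ, hcirc, fun i => i.elim0, ?_⟩
      rw [← hxn, heq]
      simp
    · intro k _
      simp
  · -- main case s ≠ t
    obtain ⟨F, hFa, hyflow, hyunder, hymax⟩ := D.exists_int_maxflow s t hst u' a ha0 hu'
    set y : E → ℝ := fun e => if e ∈ F then (a:ℝ) else 0 with hydef
    have hyval : D.excess y s = (p₁ : ℝ) * a := by
      rw [hp₁]
      exact le_antisymm (hxa.2.2 y hyunder hyflow) (hymax xa hxa.1 hxa.2.1)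
    constructor
    · -- membership: decompose into exactly p₁ + p₂ paths
      -- decompose y into p₁ paths of value a
      set n₁ : E → ℕ := fun e => if e ∈ F then 1 else 0 with hn₁
      have hyn : (fun e => (n₁ e : ℝ) * a) = y := by
        funext e
        rw [hn₁, hydef]
        dsimp only
        split <;> simp
      obtain ⟨P₁, circ₁, hcirc₁, hP₁, heq₁⟩ := D.decompose s t (a:ℝ) ha0 (∑ e, n₁ e) n₁ rfl p₁
        (by rw [hyn]; exact hyflow.2) (by rw [hyn]; exact hyval)
      -- decompose z = x - y into p₂ paths of value b
      have hz : ∀ e, ∃ k : ℕ, (x - y) e = (k : ℝ) * b := by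
        intro e
        by_cases he : e ∈ F
        · refine ⟨0, ?_⟩
          have hxe : x e = a := hxea e (hFa e he)
          simp [hydef, he, hxe]
        · rcases hvals e with h | h | h
          · exact ⟨0, by simp [hydef, he, h]⟩
          · exact ⟨m, by simp only [Pi.sub_apply, hydef, if_neg he, h, hm]; push_cast; ring⟩
          · exact ⟨1, by simp [hydef, he, h]⟩
      choose n₂ hn₂ using hz
      have hzn : (fun e => (n₂ e : ℝ) * b) = x - y := funext fun e => (hn₂ e).symm
      have hzcons : ∀ v, v ≠ s → v ≠ t → D.excess (x - y) v = 0 := by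
        intro v hvs hvt
        rw [excess_sub, hflow.2 v hvs hvt, hyflow.2 v hvs hvt, sub_zero]
      have hzex : D.excess (x - y) s = (p₂ : ℝ) * b := by
        rw [excess_sub, hyval, hp₁, hp₂, ← excess_sub]
      obtain ⟨P₂, circ₂, hcirc₂, hP₂, heq₂⟩ := D.decompose s t (b:ℝ) hb0 (∑ e, n₂ e) n₂ rfl p₂
        (by rw [hzn]; exact hzcons) (by rw [hzn]; exact hzex)
      refine ⟨Fin.append P₁ P₂, Fin.append (fun _ => (a:ℝ)) (fun _ => (b:ℝ)),
        circ₁ + circ₂, hcirc₁.add hcirc₂, ?_, ?_⟩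
      · intro i
        refine Fin.addCases ?_ ?_ i
        · intro j; rw [Fin.append_left, Fin.append_left]; exact ⟨hP₁ j, ha0⟩
        · intro j; rw [Fin.append_right, Fin.append_right]; exact ⟨hP₂ j, hb0⟩
      · have hsum : (∑ i : Fin (p₁ + p₂),
            pathFlow (Fin.append P₁ P₂ i) (Fin.append (fun _ => (a:ℝ)) (fun _ => (b:ℝ)) i))
            = (∑ i, pathFlow (P₁ i) (a:ℝ)) + ∑ i, pathFlow (P₂ i) (b:ℝ) := by
          rw [Fin.sum_univ_add]
          congr 1
          · exact Finset.sum_congr rfl fun j _ => by rw [Fin.append_left, Fin.append_left]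
          · exact Finset.sum_congr rfl fun j _ => by rw [Fin.append_right, Fin.append_right]
        rw [hsum]
        have heq₁' : y = circ₁ + ∑ i, pathFlow (P₁ i) (a:ℝ) := by rw [← hyn]; exact heq₁
        have heq₂' : x - y = circ₂ + ∑ i, pathFlow (P₂ i) (b:ℝ) := by rw [← hzn]; exact heq₂
        have hx : x = (circ₁ + ∑ i, pathFlow (P₁ i) (a:ℝ))
            + (circ₂ + ∑ i, pathFlow (P₂ i) (b:ℝ)) := by
          rw [← heq₁', ← heq₂']; ring
        rw [hx]
        ring
    · -- lower bound
      rintro k ⟨P, r, c, hcirc, hPr, hxeq⟩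
      have hPne : ∀ i, P i ≠ [] := by
        intro i hnil
        have := (hPr i).1.1
        rw [hnil] at this
        exact hst this
      have hval : D.excess x s = ∑ i, r i := by
        rw [hxeq, excess_add, excess_circulation hcirc, excess_sum]
        rw [zero_add]
        refine Finset.sum_congr rfl fun i _ => ?_
        rw [excess_pathFlow (hPr i).1.1 (hPr i).1.2, if_pos rfl, if_neg (fun h => hst h.symm)]
        ring
      have hxval : D.excess x s = (p₁ : ℝ) * a + (p₂ : ℝ) * b := by
        have := D.excess_sub x xa s
        rw [← hp₂] at this
        linarith [hp₁]
      have hdom : ∀ (I : Finset (Fin k)) (e : E),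
          (∑ i ∈ I, pathFlow (P i) (r i) e) ≤ x e := by
        intro I e
        have h1 : (∑ i ∈ I, pathFlow (P i) (r i) e) ≤ ∑ i, pathFlow (P i) (r i) e := by
          refine Finset.sum_le_sum_of_subset_of_nonneg (Finset.subset_univ I) ?_
          intro i _ _
          unfold pathFlow
          split
          · exact (hPr i).2.le
          · exact le_rfl
        have h2 : x e = c e + ∑ i, pathFlow (P i) (r i) e := by
          rw [hxeq]; simp [Finset.sum_apply]
        have h3 := circulation_nonneg hcirc e
        linarith
      have hri : ∀ i e, e ∈ P i → r i ≤ x e := by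
        intro i e he
        have := hdom {i} e
        rw [Finset.sum_singleton] at this
        unfold pathFlow at this
        rwa [if_pos he] at this
      set S : Finset (Fin k) := Finset.univ.filter (fun i => ∀ e ∈ P i, x e = (a:ℝ)) with hS
      have hSa : ∀ i ∈ S, r i ≤ (a:ℝ) := by
        intro i hi
        obtain ⟨e, he⟩ := List.exists_mem_of_ne_nil _ (hPne i)
        have := hri i e he
        rwa [(Finset.mem_filter.1 hi).2 e he] at this
      have hTb : ∀ i ∈ Sᶜ, r i ≤ (b:ℝ) := by
        intro i hi
        have : ¬(∀ e ∈ P i, x e = (a:ℝ)) := by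
          intro h
          exact (Finset.mem_compl.1 hi) (Finset.mem_filter.2 ⟨Finset.mem_univ _, h⟩)
        push_neg at this
        obtain ⟨e, he, hxe⟩ := this
        have hr := hri i e he
        rcases hvals e with h | h | h
        · rw [h] at hr; linarith
        · exact absurd h hxe
        · rw [h] at hr; exact hr
      -- the S-part is a flow in the support network
      have hσ : (∑ i ∈ S, r i) ≤ (p₁ : ℝ) * a := by
        set y' : E → ℝ := ∑ i ∈ S, (fun e => pathFlow (P i) (r i) e) with hy'
        have hy'app : ∀ e, y' e = ∑ i ∈ S, pathFlow (P i) (r i) e := by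
          intro e; rw [hy']; simp [Finset.sum_apply]
        have hy'nn : ∀ e, 0 ≤ y' e := by
          intro e
          rw [hy'app]
          refine Finset.sum_nonneg fun i _ => ?_
          unfold pathFlow
          split
          · exact (hPr i).2.le
          · exact le_rfl
        have hy'under : D.IsFlowUnder u' y' := by
          intro e
          refine ⟨hy'nn e, ?_⟩
          by_cases hcase : ∃ i ∈ S, e ∈ P i
          · obtain ⟨i, hiS, hie⟩ := hcase
            have hxe : x e = a := (Finset.mem_filter.1 hiS).2 e hie
            have : u' e = x e := by rw [hu'def]; simp [hxe]
            rw [this, hy'app]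
            exact hdom S e
          · push_neg at hcase
            have : y' e = 0 := by
              rw [hy'app]
              exact Finset.sum_eq_zero fun i hi => by
                unfold pathFlow
                rw [if_neg (hcase i hi)]
            rw [this]
            rcases hu' e with h | h
            · simp [h]
            · rw [h]; exact ha0.le
        have hy'flow : D.IsSTFlow s t y' := by
          refine ⟨hy'nn, fun v hvs hvt => ?_⟩
          rw [hy', excess_sum]
          refine Finset.sum_eq_zero fun i _ => ?_
          have : (fun e => pathFlow (P i) (r i) e) = pathFlow (P i) (r i) := rfl
          rw [this, excess_pathFlow (hPr i).1.1 (hPr i).1.2,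
            if_neg (fun h => hvs h.symm), if_neg (fun h => hvt h.symm)]
          ring
        have hle := hxa.2.2 y' hy'under hy'flow
        have : D.excess y' s = ∑ i ∈ S, r i := by
          rw [hy', excess_sum]
          refine Finset.sum_congr rfl fun i _ => ?_
          have : (fun e => pathFlow (P i) (r i) e) = pathFlow (P i) (r i) := rfl
          rw [this, excess_pathFlow (hPr i).1.1 (hPr i).1.2, if_pos rfl,
            if_neg (fun h => hst h.symm)]
          ring
        rw [this] at hle
        rw [hp₁]
        exact hle
      -- arithmetic
      have hcards : (S.card : ℝ) * a ≥ ∑ i ∈ S, r i := by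
        calc (∑ i ∈ S, r i) ≤ ∑ _i ∈ S, (a:ℝ) := Finset.sum_le_sum hSa
        _ = S.card * a := by rw [Finset.sum_const]; simp [mul_comm]
      have hcardt : ((Sᶜ : Finset (Fin k)).card : ℝ) * b ≥ ∑ i ∈ Sᶜ, r i := by
        calc (∑ i ∈ Sᶜ, r i) ≤ ∑ _i ∈ Sᶜ, (b:ℝ) := Finset.sum_le_sum hTb
        _ = (Sᶜ : Finset (Fin k)).card * b := by rw [Finset.sum_const]; simp [mul_comm]
      have hksplit : S.card + (Sᶜ : Finset (Fin k)).card = k := by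
        rw [Finset.card_add_card_compl]
        simp
      have hsum_split : (∑ i ∈ S, r i) + ∑ i ∈ Sᶜ, r i = (p₁ : ℝ) * a + (p₂ : ℝ) * b := by
        rw [Finset.sum_add_sum_compl, ← hval]
        exact hxval
      have hkreal : (p₁ : ℝ) + (p₂ : ℝ) ≤ (k : ℝ) := by
        set σ := ∑ i ∈ S, r i
        set τ := ∑ i ∈ Sᶜ, r i
        have hk : (S.card : ℝ) + ((Sᶜ : Finset (Fin k)).card : ℝ) = (k : ℝ) := by
          rw [← Nat.cast_add]
          exact_mod_cast hksplit
        rw [← hk]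
        have key : ((p₁ : ℝ) + p₂) * (a * b) ≤ ((S.card : ℝ) + ((Sᶜ : Finset (Fin k)).card : ℝ)) * (a * b) := by
          nlinarith [mul_nonneg (sub_nonneg.2 hσ) (sub_nonneg.2 hba0.le)]
        have hab : (0:ℝ) < a * b := mul_pos ha0 hb0
        exact le_of_mul_le_mul_right key hab
      exact_mod_cast hkreal
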